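/- arXiv:1111.2774 — 2 statements merged into one kernel-verified Lean document; each statement's English description precedes it below -/
import Mathlib

section
/- If B is a closed disk of radius r in ℂ, then its 1-dimensional Hausdorff content σ(B) equals r. -/
open scoped ENNReal NNReal

noncomputable section

/-- 1-dimensional Hausdorff content: infimum of sums of radii over countable disk covers. -/
def sigmaContent (B : Set ℂ) : ℝ≥0∞ :=
  ⨅ (c : ℕ → ℂ) (r : ℕ → ℝ≥0) (_ : B ⊆ ⋃ i, Metric.closedBall (c i) (r i)),
    ∑' i, (r i : ℝ≥0∞)

/-- The 1-dimensional Hausdorff content of a closed disk of radius `r` equals `r`. -/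
theorem sigmaContent_closedBall (a : ℂ) (r : ℝ≥0) :
    sigmaContent (Metric.closedBall a r) = r := by
  apply le_antisymm
  · -- cover by the ball itself
    refine le_trans (iInf_le _ (fun _ => a)) ?_
    refine le_trans (iInf_le _ (fun i => if i = 0 then r else 0)) ?_
    refine le_trans (iInf_le _ ?_) ?_
    · intro z hz
      exact Set.mem_iUnion.2 ⟨0, by simpa using hz⟩
    · have : (fun i => ((if i = 0 then r else 0 : ℝ≥0) : ℝ≥0∞))
          = fun i => if i = 0 then (r : ℝ≥0∞) else 0 := by
        funext i; split <;> simp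
      rw [this, tsum_ite_eq]
  · -- lower bound via projection to the real line
    refine le_iInf fun c => le_iInf fun ρ => le_iInf fun hcov => ?_
    -- the segment [a.re - r, a.re + r] is covered by the projected intervals
    have hsub : Set.Icc (a.re - r) (a.re + r) ⊆
        ⋃ i, Set.Icc ((c i).re - ρ i) ((c i).re + ρ i) := by
      intro x hx
      have hz : (⟨x, a.im⟩ : ℂ) ∈ Metric.closedBall a r := by
        rw [Metric.mem_closedBall, Complex.dist_of_im_eq (show Complex.im ⟨x, a.im⟩ = a.im from rfl)]
        rw [Real.dist_eq]
        simp only []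
        rw [abs_sub_le_iff]
        constructor <;> linarith [hx.1, hx.2]
      rcases Set.mem_iUnion.1 (hcov hz) with ⟨i, hi⟩
      rw [Metric.mem_closedBall] at hi
      refine Set.mem_iUnion.2 ⟨i, ?_⟩
      have := Complex.abs_re_le_norm ((⟨x, a.im⟩ : ℂ) - c i)
      rw [Complex.dist_eq] at hi
      have hre : |x - (c i).re| ≤ ρ i := by
        simpa using this.trans hi
      rw [abs_sub_le_iff] at hre
      constructor <;> linarith [hre.1, hre.2]
    have hμ := MeasureTheory.measure_mono (μ := MeasureTheory.volume) hsub
    have h2 : MeasureTheory.volume (Set.Icc (a.re - r) (a.re + r))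
        = ENNReal.ofReal (2 * r) := by
      rw [Real.volume_Icc]; ring_nf
    have h3 : MeasureTheory.volume (⋃ i, Set.Icc ((c i).re - ρ i) ((c i).re + ρ i))
        ≤ ∑' i, (2 * ρ i : ℝ≥0∞) := by
      refine le_trans (MeasureTheory.measure_iUnion_le _) ?_
      refine ENNReal.tsum_le_tsum fun i => ?_
      rw [Real.volume_Icc]
      have : (c i).re + ρ i - ((c i).re - ρ i) = 2 * (ρ i : ℝ) := by ring
      rw [this]
      rw [show ((2 : ℝ) * ρ i) = ((2 * ρ i : ℝ≥0) : ℝ) by push_cast; ring,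
        ENNReal.ofReal_coe_nnreal]
      push_cast; rfl
    have key : ENNReal.ofReal (2 * r) ≤ ∑' i, (2 * ρ i : ℝ≥0∞) :=
      h2 ▸ (hμ.trans h3)
    have hl : (2 : ℝ≥0∞) * r ≤ 2 * ∑' i, (ρ i : ℝ≥0∞) := by
      rw [← ENNReal.tsum_mul_left]
      refine le_trans ?_ key
      rw [show ((2 : ℝ) * r) = ((2 * r : ℝ≥0) : ℝ) by push_cast; ring,
        ENNReal.ofReal_coe_nnreal]
      push_cast; rfl
    exact (ENNReal.mul_le_mul_iff_right (by norm_num) (by norm_num)).1 hl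
end
end

section
/- If f₁, …, f_d are meromorphic in a domain D and polewise independent with respect to the multi-index m = (m₁, …, m_d) in D, then the system f = (f₁, …, f_d) has at least |m| = m₁ + ⋯ + m_d poles in D, counting multiplicities. -/
open Polynomial Filter Set
open scoped Classical

noncomputable section

/-- The order of `a` as a pole of `f` (0 if `f` is not meromorphic at `a` or has no pole
there). -/
def poleOrd (f : ℂ → ℂ) (a : ℂ) : ℕ :=
  if h : MeromorphicAt f a then (-((meromorphicOrderAt f a).untopD 0)).toNat else 0

/-- A system `f = (f₁, …, f_d)` of meromorphic functions on `D` is polewise independent with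
respect to the multi-index `m` in `D`: no nontrivial combination `Σ pⱼ fⱼ` with `deg pⱼ ≤ mⱼ - 1`
(and `pⱼ = 0` when `mⱼ = 0`) is pole-free in `D`. -/
def PolewiseIndep {d : ℕ} (f : Fin d → ℂ → ℂ) (m : Fin d → ℕ) (D : Set ℂ) : Prop :=
  ¬ ∃ p : Fin d → Polynomial ℂ, (∃ j, p j ≠ 0) ∧ (∀ j, (p j).degree < (m j : ℕ)) ∧
      ∀ a ∈ D, poleOrd (fun z => ∑ j, (p j).eval z * f j z) a = 0

open scoped Topology

namespace PIAux

/-- `h` has "meromorphic order ≥ s" at `a`, witnessed by an analytic factor. -/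
def OrdGE (h : ℂ → ℂ) (a : ℂ) (s : ℤ) : Prop :=
  ∃ G : ℂ → ℂ, AnalyticAt ℂ G a ∧ ∀ᶠ z in 𝓝[≠] a, h z = (z - a) ^ s * G z

lemma an_pow (a : ℂ) (n : ℕ) : AnalyticAt ℂ (fun z => (z - a) ^ n) a := by
  exact (analyticAt_id.sub analyticAt_const).pow n

lemma ordGE_zero (a : ℂ) (s : ℤ) : OrdGE (fun _ => (0 : ℂ)) a s :=
  ⟨0, analyticAt_const, by simp⟩

lemma OrdGE.add {h₁ h₂ : ℂ → ℂ} {a : ℂ} {s : ℤ} (H₁ : OrdGE h₁ a s) (H₂ : OrdGE h₂ a s) :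
    OrdGE (fun z => h₁ z + h₂ z) a s := by
  obtain ⟨G₁, hG₁, e₁⟩ := H₁
  obtain ⟨G₂, hG₂, e₂⟩ := H₂
  refine ⟨fun z => G₁ z + G₂ z, hG₁.add hG₂, ?_⟩
  filter_upwards [e₁, e₂] with z hz₁ hz₂
  rw [hz₁, hz₂]; ring

lemma OrdGE.analytic_mul {h φ : ℂ → ℂ} {a : ℂ} {s : ℤ} (hφ : AnalyticAt ℂ φ a)
    (H : OrdGE h a s) : OrdGE (fun z => φ z * h z) a s := by
  obtain ⟨G, hG, e⟩ := H
  refine ⟨fun z => φ z * G z, hφ.mul hG, ?_⟩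
  filter_upwards [e] with z hz
  rw [hz]; ring

lemma OrdGE.const_mul {h : ℂ → ℂ} {a : ℂ} {s : ℤ} (c : ℂ) (H : OrdGE h a s) :
    OrdGE (fun z => c * h z) a s :=
  H.analytic_mul analyticAt_const

lemma ordGE_sum {ι : Type*} (t : Finset ι) (F : ι → ℂ → ℂ) (a : ℂ) (s : ℤ)
    (hF : ∀ j ∈ t, OrdGE (F j) a s) : OrdGE (fun z => ∑ j ∈ t, F j z) a s := by
  induction t using Finset.cons_induction with
  | empty => simpa using ordGE_zero a s
  | cons j t hj ih =>
    simp only [Finset.sum_cons]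
    exact (hF j (Finset.mem_cons_self j t)).add (ih fun i hi => hF i (Finset.mem_cons_of_mem hi))

lemma ordGE_of_order {h : ℂ → ℂ} {a : ℂ} (hm : MeromorphicAt h a) {s : ℤ}
    (hs : (s : WithTop ℤ) ≤ meromorphicOrderAt h a) : OrdGE h a s := by
  rcases eq_or_ne (meromorphicOrderAt h a) ⊤ with ho | ho
  · rw [meromorphicOrderAt_eq_top_iff] at ho
    exact ⟨0, analyticAt_const, by filter_upwards [ho] with z hz; simp [hz]⟩
  · obtain ⟨t, ht⟩ := WithTop.ne_top_iff_exists.mp ho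
    have hst : s ≤ t := by
      rw [← ht] at hs; exact_mod_cast hs
    obtain ⟨g, hg, _, e⟩ := (meromorphicOrderAt_eq_int_iff (n := t) hm).mp ht.symm
    refine ⟨fun z => (z - a) ^ ((t - s).toNat) * g z, (an_pow a _).mul hg, ?_⟩
    filter_upwards [e, self_mem_nhdsWithin] with z hz hz'
    have hza : z - a ≠ 0 := sub_ne_zero.mpr hz'
    have key : (z - a) ^ s * (z - a) ^ ((t - s).toNat : ℤ) = (z - a) ^ t := by
      rw [← zpow_add₀ hza]
      congr 1
      omega
    rw [hz, smul_eq_mul, ← mul_assoc, ← key, zpow_natCast]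

lemma an_factor {G : ℂ → ℂ} {a : ℂ} (hG : AnalyticAt ℂ G a) (h0 : G a = 0) :
    ∃ H : ℂ → ℂ, AnalyticAt ℂ H a ∧ ∀ᶠ z in 𝓝 a, G z = (z - a) * H z := by
  by_cases h : ∀ᶠ z in 𝓝 a, G z = 0
  · exact ⟨0, analyticAt_const, by filter_upwards [h] with z hz; simp [hz]⟩
  · obtain ⟨n, g, hg, hga, e⟩ := hG.exists_eventuallyEq_pow_smul_nonzero_iff.mpr h
    have hGa : G a = (a - a) ^ n • g a := e.self_of_nhds
    have hn : n ≠ 0 := by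
      rintro rfl
      apply hga
      simpa [h0] using hGa.symm
    refine ⟨fun z => (z - a) ^ (n - 1) * g z, (an_pow a _).mul hg, ?_⟩
    filter_upwards [e] with z hz
    rw [hz, smul_eq_mul, ← mul_assoc]
    congr 1
    rw [← pow_succ']
    congr 1
    omega

lemma eq_of_punctured {h₁ h₂ : ℂ → ℂ} {a : ℂ} (c₁ : ContinuousAt h₁ a) (c₂ : ContinuousAt h₂ a)
    (he : ∀ᶠ z in 𝓝[≠] a, h₁ z = h₂ z) : h₁ a = h₂ a := by
  have : (𝓝[≠] a).NeBot := inferInstance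
  have t₁ : Tendsto h₁ (𝓝[≠] a) (𝓝 (h₁ a)) := c₁.tendsto.mono_left nhdsWithin_le_nhds
  have t₂ : Tendsto h₂ (𝓝[≠] a) (𝓝 (h₂ a)) := c₂.tendsto.mono_left nhdsWithin_le_nhds
  have he' : h₂ =ᶠ[𝓝[≠] a] h₁ := Filter.EventuallyEq.symm he
  exact tendsto_nhds_unique t₁ (t₂.congr' he')

lemma order_ge_neg_poleOrd {h : ℂ → ℂ} {a : ℂ} (hm : MeromorphicAt h a) :
    ((-(poleOrd h a : ℤ) : ℤ) : WithTop ℤ) ≤ meromorphicOrderAt h a := by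
  rw [poleOrd, dif_pos hm]
  rcases eq_or_ne (meromorphicOrderAt h a) ⊤ with ho | ho
  · rw [ho]; exact le_top
  · obtain ⟨t, ht⟩ := WithTop.ne_top_iff_exists.mp ho
    rw [← ht, WithTop.untopD_coe]
    exact WithTop.coe_le_coe.mpr (by omega)

lemma order_nonneg_of_poleOrd {h : ℂ → ℂ} {a : ℂ} (hm : MeromorphicAt h a)
    (h0 : poleOrd h a = 0) : ((0 : ℤ) : WithTop ℤ) ≤ meromorphicOrderAt h a := by
  rw [poleOrd, dif_pos hm] at h0
  rcases eq_or_ne (meromorphicOrderAt h a) ⊤ with ho | ho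
  · rw [ho]; exact le_top
  · obtain ⟨t, ht⟩ := WithTop.ne_top_iff_exists.mp ho
    rw [← ht, WithTop.untopD_coe] at h0
    rw [← ht]
    exact WithTop.coe_le_coe.mpr (by omega)

lemma poleOrd_eq_zero {h : ℂ → ℂ} {a : ℂ} (hm : MeromorphicAt h a) (hg : OrdGE h a 0) :
    poleOrd h a = 0 := by
  obtain ⟨G, hG, e⟩ := hg
  have e' : ∀ᶠ z in 𝓝[≠] a, h z = G z := by
    filter_upwards [e] with z hz; simpa using hz
  rw [poleOrd, dif_pos hm]
  rcases eq_or_ne (meromorphicOrderAt h a) ⊤ with ho | ho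
  · rw [ho]; simp
  · obtain ⟨t, ht⟩ := WithTop.ne_top_iff_exists.mp ho
    rw [← ht, WithTop.untopD_coe]
    by_contra hc
    have htneg : t < 0 := by omega
    obtain ⟨g, hganal, hga, eg⟩ := (meromorphicOrderAt_eq_int_iff (n := t) hm).mp ht.symm
    have key : ∀ᶠ z in 𝓝[≠] a, (z - a) ^ ((-t).toNat) * G z = g z := by
      filter_upwards [e', eg, self_mem_nhdsWithin] with z h1 h2 hz
      have hza : z - a ≠ 0 := sub_ne_zero.mpr hz
      rw [smul_eq_mul] at h2
      have hGz : G z = (z - a) ^ t * g z := by rw [← h1, h2]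
      rw [hGz, ← mul_assoc, ← zpow_natCast (z - a) ((-t).toNat),
        Int.toNat_of_nonneg (by omega : (0:ℤ) ≤ -t), ← zpow_add₀ hza]
      simp
    have heq := eq_of_punctured (((an_pow a ((-t).toNat)).mul hG).continuousAt)
      hganal.continuousAt key
    simp only [Pi.mul_apply] at heq
    rw [sub_self, zero_pow (by omega : (-t).toNat ≠ 0), zero_mul] at heq
    exact hga heq.symm

section System

variable {d : ℕ} (f : Fin d → ℂ → ℂ) (m : Fin d → ℕ)

/-- The combination `z ↦ Σⱼ (Σᵢ cⱼᵢ zⁱ) fⱼ(z)` determined by the coefficients `c`. -/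
def gfun (c : ∀ j, Fin (m j) → ℂ) : ℂ → ℂ :=
  fun z => ∑ j, (∑ i, c j i * z ^ (i : ℕ)) * f j z

lemma gfun_add (c c' : ∀ j, Fin (m j) → ℂ) (z : ℂ) :
    gfun f m (c + c') z = gfun f m c z + gfun f m c' z := by
  unfold gfun
  rw [← Finset.sum_add_distrib]
  refine Finset.sum_congr rfl fun j _ => ?_
  rw [← add_mul, ← Finset.sum_add_distrib]
  congr 1
  refine Finset.sum_congr rfl fun i _ => ?_
  simp [add_mul]

lemma gfun_smul (r : ℂ) (c : ∀ j, Fin (m j) → ℂ) (z : ℂ) :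
    gfun f m (r • c) z = r * gfun f m c z := by
  unfold gfun
  rw [Finset.mul_sum]
  refine Finset.sum_congr rfl fun j _ => ?_
  rw [← mul_assoc, Finset.mul_sum]
  congr 1
  refine Finset.sum_congr rfl fun i _ => ?_
  simp [mul_assoc]

lemma gfun_zero (z : ℂ) : gfun f m 0 z = 0 := by
  simp [gfun]

lemma gfun_sub_smul (c q : ∀ j, Fin (m j) → ℂ) (r : ℂ) (z : ℂ) :
    gfun f m (c - r • q) z = gfun f m c z - r * gfun f m q z := by
  have h : c - r • q = c + (-r) • q := by
    rw [neg_smul, ← sub_eq_add_neg]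
  rw [h, gfun_add, gfun_smul]
  ring

/-- The submodule of coefficient vectors whose combination has order ≥ s at a. -/
def ordSub (a : ℂ) (s : ℤ) : Submodule ℂ (∀ j, Fin (m j) → ℂ) where
  carrier := {c | OrdGE (gfun f m c) a s}
  add_mem' := by
    intro c c' hc hc'
    have h2 : gfun f m (c + c') = fun z => gfun f m c z + gfun f m c' z :=
      funext (gfun_add f m c c')
    simpa only [Set.mem_setOf_eq, h2] using OrdGE.add hc hc'
  zero_mem' := by
    have h2 : gfun f m 0 = fun _ => (0 : ℂ) := funext (gfun_zero f m)
    simpa only [Set.mem_setOf_eq, h2] using ordGE_zero a s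
  smul_mem' := by
    intro r c hc
    have h2 : gfun f m (r • c) = fun z => r * gfun f m c z := funext (gfun_smul f m r c)
    simpa only [Set.mem_setOf_eq, h2] using OrdGE.const_mul r hc

lemma mem_ordSub {a : ℂ} {s : ℤ} {c : ∀ j, Fin (m j) → ℂ} :
    c ∈ ordSub f m a s ↔ OrdGE (gfun f m c) a s := Iff.rfl

lemma an_poly {n : ℕ} (c : Fin n → ℂ) (a : ℂ) :
    AnalyticAt ℂ (fun z => ∑ i, c i * z ^ (i : ℕ)) a := by
  apply Finset.analyticAt_fun_sum
  intro i _
  exact analyticAt_const.mul ((analyticAt_id.pow _))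

lemma gfun_ordGE {a : ℂ} {s : ℤ} (c : ∀ j, Fin (m j) → ℂ)
    (h : ∀ j, OrdGE (f j) a s) : OrdGE (gfun f m c) a s := by
  apply ordGE_sum
  intro j _
  exact (h j).analytic_mul (an_poly _ a)

lemma mero_sum {ι : Type*} (t : Finset ι) (F : ι → ℂ → ℂ) (a : ℂ)
    (h : ∀ j ∈ t, MeromorphicAt (F j) a) :
    MeromorphicAt (fun z => ∑ j ∈ t, F j z) a := by
  induction t using Finset.cons_induction with
  | empty => simpa using MeromorphicAt.const (0 : ℂ) a
  | cons j t hj ih =>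
    simp only [Finset.sum_cons]
    exact (h j (Finset.mem_cons_self j t)).add (ih fun i hi => h i (Finset.mem_cons_of_mem hi))

lemma gfun_mero {a : ℂ} (hfa : ∀ j, MeromorphicAt (f j) a) (c : ∀ j, Fin (m j) → ℂ) :
    MeromorphicAt (gfun f m c) a := by
  apply mero_sum
  intro j _
  exact ((an_poly (c j) a).meromorphicAt.mul (hfa j))

open Module

lemma step (a : ℂ) (s : ℤ) (W : Submodule ℂ (∀ j, Fin (m j) → ℂ))
    (hW : ∀ c ∈ W, OrdGE (gfun f m c) a s) :
    ∃ W' : Submodule ℂ (∀ j, Fin (m j) → ℂ), W' ≤ W ∧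
      finrank ℂ W ≤ finrank ℂ W' + 1 ∧ ∀ c ∈ W', OrdGE (gfun f m c) a (s + 1) := by
  by_cases hall : ∀ c ∈ W, OrdGE (gfun f m c) a (s + 1)
  · exact ⟨W, le_rfl, Nat.le_succ _, hall⟩
  push_neg at hall
  obtain ⟨q, hqW, hq⟩ := hall
  obtain ⟨Gq, hGq, eq⟩ := hW q hqW
  have hq0 : q ≠ 0 := by
    rintro rfl
    apply hq
    have h2 : gfun f m 0 = fun _ => (0 : ℂ) := funext (gfun_zero f m)
    rw [h2]
    exact ordGE_zero a (s + 1)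
  have hGqa : Gq a ≠ 0 := by
    intro h0
    obtain ⟨H, hH, eH⟩ := an_factor hGq h0
    apply hq
    refine ⟨H, hH, ?_⟩
    filter_upwards [eq, eH.filter_mono nhdsWithin_le_nhds, self_mem_nhdsWithin] with z h1 h2 hz
    have hza : z - a ≠ 0 := sub_ne_zero.mpr hz
    rw [h1, h2, zpow_add₀ hza, zpow_one]
    ring
  refine ⟨W ⊓ ordSub f m a (s + 1), inf_le_left, ?_, fun c hc => hc.2⟩
  have hsub : W ≤ (W ⊓ ordSub f m a (s + 1)) ⊔ Submodule.span ℂ {q} := by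
    intro c hc
    obtain ⟨Gc, hGc, ec⟩ := hW c hc
    set r := Gc a / Gq a with hr
    have h1 : c - r • q ∈ W := W.sub_mem hc (W.smul_mem r hqW)
    have h2 : c - r • q ∈ ordSub f m a (s + 1) := by
      have hGan : AnalyticAt ℂ (fun z => Gc z - r * Gq z) a :=
        hGc.sub (analyticAt_const.mul hGq)
      have hval0 : Gc a - r * Gq a = 0 := by
        rw [hr, div_mul_cancel₀ _ hGqa, sub_self]
      obtain ⟨H, hH, eH⟩ := an_factor hGan hval0
      rw [mem_ordSub]
      refine ⟨H, hH, ?_⟩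
      filter_upwards [ec, eq, eH.filter_mono nhdsWithin_le_nhds, self_mem_nhdsWithin]
        with z h1' h2' h3' hz
      have hza : z - a ≠ 0 := sub_ne_zero.mpr hz
      rw [gfun_sub_smul, h1', h2', zpow_add₀ hza, zpow_one, mul_assoc, ← h3']
      ring
    refine Submodule.mem_sup.mpr ⟨c - r • q, ⟨h1, h2⟩, r • q,
      Submodule.mem_span_singleton.mpr ⟨r, rfl⟩, ?_⟩
    abel
  calc finrank ℂ W ≤ finrank ℂ ((W ⊓ ordSub f m a (s + 1)) ⊔ Submodule.span ℂ {q} :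
        Submodule ℂ (∀ j, Fin (m j) → ℂ)) := Submodule.finrank_mono hsub
    _ ≤ finrank ℂ (W ⊓ ordSub f m a (s + 1) : Submodule ℂ (∀ j, Fin (m j) → ℂ)) +
        finrank ℂ (Submodule.span ℂ ({q} : Set (∀ j, Fin (m j) → ℂ))) :=
        Submodule.finrank_add_le_finrank_add_finrank _ _
    _ ≤ finrank ℂ (W ⊓ ordSub f m a (s + 1) : Submodule ℂ (∀ j, Fin (m j) → ℂ)) + 1 := by
        rw [finrank_span_singleton hq0]

lemma stepN (a : ℂ) (τ : ℕ) :
    ∀ W : Submodule ℂ (∀ j, Fin (m j) → ℂ),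
      (∀ c ∈ W, OrdGE (gfun f m c) a (-(τ : ℤ))) →
      ∃ W' : Submodule ℂ (∀ j, Fin (m j) → ℂ), W' ≤ W ∧
        finrank ℂ W ≤ finrank ℂ W' + τ ∧ ∀ c ∈ W', OrdGE (gfun f m c) a 0 := by
  induction τ with
  | zero =>
    intro W hW
    exact ⟨W, le_rfl, by omega, by simpa using hW⟩
  | succ τ ih =>
    intro W hW
    have hW' : ∀ c ∈ W, OrdGE (gfun f m c) a (-(τ : ℤ) - 1) := by
      intro c hc
      have h := hW c hc
      have : (-((τ + 1 : ℕ) : ℤ)) = -(τ : ℤ) - 1 := by push_cast; ring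
      rwa [this] at h
    obtain ⟨W₁, hle₁, hrk₁, h₁⟩ := step f m a (-(τ : ℤ) - 1) W hW'
    have h₁' : ∀ c ∈ W₁, OrdGE (gfun f m c) a (-(τ : ℤ)) := by
      intro c hc
      have h := h₁ c hc
      have : -(τ : ℤ) - 1 + 1 = -(τ : ℤ) := by ring
      rwa [this] at h
    obtain ⟨W₂, hle₂, hrk₂, h₂⟩ := ih W₁ h₁'
    exact ⟨W₂, hle₂.trans hle₁, by omega, h₂⟩

lemma stepP (P : Finset ℂ) (τ : ℂ → ℕ) :
    ∀ W : Submodule ℂ (∀ j, Fin (m j) → ℂ),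
      (∀ c ∈ W, ∀ a ∈ P, OrdGE (gfun f m c) a (-(τ a : ℤ))) →
      ∃ W' : Submodule ℂ (∀ j, Fin (m j) → ℂ), W' ≤ W ∧
        finrank ℂ W ≤ finrank ℂ W' + ∑ a ∈ P, τ a ∧
        ∀ c ∈ W', ∀ a ∈ P, OrdGE (gfun f m c) a 0 := by
  induction P using Finset.cons_induction with
  | empty =>
    intro W hW
    exact ⟨W, le_rfl, by simp, by simp⟩
  | cons a P ha ih =>
    intro W hW
    obtain ⟨W₁, hle₁, hrk₁, h₁⟩ := stepN f m a (τ a) W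
      (fun c hc => hW c hc a (Finset.mem_cons_self a P))
    obtain ⟨W₂, hle₂, hrk₂, h₂⟩ := ih W₁
      (fun c hc b hb => hW c (hle₁ hc) b (Finset.mem_cons_of_mem hb))
    refine ⟨W₂, hle₂.trans hle₁, ?_, ?_⟩
    · rw [Finset.sum_cons]; omega
    · intro c hc b hb
      rcases Finset.mem_cons.mp hb with rfl | hb'
      · exact h₁ c (hle₂ hc)
      · exact h₂ c hc b hb'

end System

end PIAux

open PIAux Module

/-- If `f₁, …, f_d` are meromorphic in a domain `D` and polewise independent with respect to
`m` in `D`, then the system has at least `|m|` poles in `D`, counting multiplicities. -/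
theorem polewise_indep_num_poles (d : ℕ) (f : Fin d → ℂ → ℂ) (m : Fin d → ℕ)
    (hm : m ≠ 0) (D : Set ℂ) (hD : IsOpen D) (hDc : IsConnected D)
    (hf : ∀ j, MeromorphicOn (f j) D) (hind : PolewiseIndep f m D) :
    ∃ S : Finset ℂ, ↑S ⊆ D ∧ (∀ a ∈ S, 0 < Finset.univ.sup fun j => poleOrd (f j) a) ∧
      (∑ j, m j) ≤ ∑ a ∈ S, Finset.univ.sup fun j => poleOrd (f j) a := by
  by_contra hS
  push_neg at hS
  set τ : ℂ → ℕ := fun a => Finset.univ.sup fun j => poleOrd (f j) a with hτdef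
  set P : Set ℂ := {a | a ∈ D ∧ 0 < τ a} with hPdef
  have hPD : P ⊆ D := fun a ha => ha.1
  have hPfin : P.Finite := by
    by_contra hinf
    have hinf' : P.Infinite := hinf
    obtain ⟨S, hSP, hcard⟩ := hinf'.exists_subset_card_eq (∑ j, m j)
    have h1 : ↑S ⊆ D := fun a ha => (hSP ha).1
    have h2 : ∀ a ∈ S, 0 < τ a := fun a ha => (hSP (by exact_mod_cast ha)).2
    have h3 := hS S h1 (by simpa only [← hτdef] using h2)
    have h4 : ∑ j, m j ≤ S.sum τ := by
      calc ∑ j, m j = S.card := hcard.symm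
        _ = ∑ _a ∈ S, 1 := by simp
        _ ≤ S.sum τ := Finset.sum_le_sum fun a ha => h2 a ha
    omega
  set Pf : Finset ℂ := hPfin.toFinset with hPfdef
  have hPfD : ↑Pf ⊆ D := by
    rw [hPfdef, Set.Finite.coe_toFinset]; exact hPD
  have hPf2 : ∀ a ∈ Pf, 0 < τ a := fun a ha => (hPfin.mem_toFinset.mp ha).2
  have hlt : Pf.sum τ < ∑ j, m j := hS Pf hPfD (by simpa only [← hτdef] using hPf2)
  -- initial hypothesis on the full space
  have htop : ∀ c : ∀ j, Fin (m j) → ℂ, ∀ a ∈ Pf, OrdGE (gfun f m c) a (-(τ a : ℤ)) := by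
    intro c a ha
    have haD : a ∈ D := hPfD ha
    apply gfun_ordGE
    intro j
    apply ordGE_of_order (hf j a haD)
    refine le_trans ?_ (order_ge_neg_poleOrd (hf j a haD))
    apply WithTop.coe_le_coe.mpr
    have hle : poleOrd (f j) a ≤ τ a := by
      simp only [hτdef]; exact Finset.le_sup (f := fun j => poleOrd (f j) a) (Finset.mem_univ j)
    omega
  obtain ⟨W', hle, hrk, hW'⟩ := stepP f m Pf τ ⊤ (fun c _ => htop c)
  have hrk' : finrank ℂ (⊤ : Submodule ℂ (∀ j, Fin (m j) → ℂ)) ≤ finrank ℂ W' + Pf.sum τ := hrk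
  have hrkV : finrank ℂ (∀ j, Fin (m j) → ℂ) = ∑ j, m j := by
    rw [Module.finrank_pi_fintype]
    congr 1
    funext j
    simp [Module.finrank_pi]
  have hrktop : finrank ℂ (⊤ : Submodule ℂ (∀ j, Fin (m j) → ℂ)) = ∑ j, m j := by
    rw [finrank_top]; exact hrkV
  have hpos : 0 < finrank ℂ W' := by omega
  obtain ⟨c, hcW, hc0⟩ : ∃ c ∈ W', c ≠ 0 := by
    have hne : W' ≠ ⊥ := by
      intro h
      rw [h, finrank_bot] at hpos
      omega
    exact (Submodule.ne_bot_iff W').mp hne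
  -- build the polynomials
  apply hind
  set p : Fin d → Polynomial ℂ := fun j => ∑ i : Fin (m j), C (c j i) * X ^ (i : ℕ) with hpdef
  have coeff_eq : ∀ j (i : Fin (m j)), (p j).coeff i = c j i := by
    intro j i
    rw [hpdef]
    simp only [finset_sum_coeff, coeff_C_mul_X_pow]
    rw [Finset.sum_eq_single i]
    · simp
    · intro b _ hb
      have : (i : ℕ) ≠ (b : ℕ) := fun h => hb (Fin.ext h.symm)
      simp [this]
    · intro h
      exact absurd (Finset.mem_univ i) h
  have heval : ∀ j (z : ℂ), (p j).eval z = ∑ i, c j i * z ^ (i : ℕ) := by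
    intro j z
    rw [hpdef]
    simp [eval_finset_sum]
  refine ⟨p, ?_, ?_, ?_⟩
  · -- some p j ≠ 0
    have : ∃ j, c j ≠ 0 := by
      by_contra h
      push_neg at h
      exact hc0 (funext fun j => h j)
    obtain ⟨j, hj⟩ := this
    have : ∃ i, c j i ≠ 0 := by
      by_contra h
      push_neg at h
      exact hj (funext fun i => h i)
    obtain ⟨i, hi⟩ := this
    refine ⟨j, fun h => hi ?_⟩
    rw [← coeff_eq j i, h, coeff_zero]
  · -- degrees
    intro j
    rw [hpdef]
    refine lt_of_le_of_lt (degree_sum_le _ _) ?_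
    rw [Finset.sup_lt_iff (WithBot.bot_lt_coe _)]
    intro i _
    exact lt_of_le_of_lt (degree_C_mul_X_pow_le _ _) (WithBot.coe_lt_coe.mpr i.isLt)
  · -- pole-free
    intro a haD
    have hfun : (fun z => ∑ j, (p j).eval z * f j z) = gfun f m c := by
      funext z
      unfold gfun
      refine Finset.sum_congr rfl fun j _ => ?_
      rw [heval]
    rw [hfun]
    have hmero : MeromorphicAt (gfun f m c) a := gfun_mero f m (fun j => hf j a haD) c
    by_cases haP : a ∈ Pf
    · exact poleOrd_eq_zero hmero (hW' c hcW a haP)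
    · have hτ0 : τ a = 0 := by
        by_contra h
        exact haP (hPfin.mem_toFinset.mpr ⟨haD, Nat.pos_of_ne_zero h⟩)
      apply poleOrd_eq_zero hmero
      apply gfun_ordGE
      intro j
      apply ordGE_of_order (hf j a haD)
      have hp0 : poleOrd (f j) a = 0 := by
        have hle2 : poleOrd (f j) a ≤ τ a := by
          simp only [hτdef]; exact Finset.le_sup (f := fun j => poleOrd (f j) a) (Finset.mem_univ j)
        omega
      exact order_nonneg_of_poleOrd (hf j a haD) hp0
end
end
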